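/- Let P=(a,a') and Q=(b,b') be points of F₀(ℝⁿ,2) and set H=‖h‖², K=‖k‖², D=h·k. If min(H,K) ≥ D and h ≠ k, then H+K−2D > 0 and δ² = 4(HK−D²)/(H+K−2D). -/

import Mathlib

open scoped RealInnerProductSpace

/-- Proposition: with `H = ‖h‖²`, `K = ‖k‖²`, `D = h·k`, if `min(H,K) ≥ D` and `h ≠ k`, then
`H + K - 2D > 0` and `δ² = 4(HK - D²)/(H + K - 2D)`. -/
theorem stmt6 {n : ℕ} (a a' b b' h k : EuclideanSpace ℝ (Fin n))
    (hP : 2 ≤ ‖a - a'‖) (hQ : 2 ≤ ‖b - b'‖)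
    (hdefh : h = (2:ℝ)⁻¹ • (a' - a)) (hdefk : k = (2:ℝ)⁻¹ • (b' - b))
    (hmin : ⟪h, k⟫ ≤ min (‖h‖ ^ 2) (‖k‖ ^ 2)) (hne : h ≠ k) :
    0 < ‖h‖ ^ 2 + ‖k‖ ^ 2 - 2 * ⟪h, k⟫ ∧
    (sInf ((fun t : ℝ => ‖(t • b + (1 - t) • a) - (t • b' + (1 - t) • a')‖) ''
        Set.Icc 0 1)) ^ 2
      = 4 * (‖h‖ ^ 2 * ‖k‖ ^ 2 - ⟪h, k⟫ ^ 2) / (‖h‖ ^ 2 + ‖k‖ ^ 2 - 2 * ⟪h, k⟫) := by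
  set H := ‖h‖ ^ 2 with hH
  set K := ‖k‖ ^ 2 with hK
  set D := ⟪h, k⟫ with hD
  have hSnorm : ‖k - h‖ ^ 2 = H + K - 2 * D := by
    rw [@norm_sub_sq_real, real_inner_comm]; ring
  have hS : 0 < H + K - 2 * D := by
    rw [← hSnorm]
    have h0 : k - h ≠ 0 := sub_ne_zero.mpr (Ne.symm hne)
    exact pow_pos (norm_pos_iff.mpr h0) 2
  set S := H + K - 2 * D with hSdef
  have hDH : D ≤ H := le_trans hmin (min_le_left _ _)
  have hDK : D ≤ K := le_trans hmin (min_le_right _ _)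
  set T : ℝ := (H - D) / S with hT
  have hT0 : 0 ≤ T := div_nonneg (by linarith) hS.le
  have hT1 : T ≤ 1 := by
    rw [div_le_one hS]; linarith
  have hvec : ∀ t : ℝ, (t • b + (1 - t) • a) - (t • b' + (1 - t) • a')
      = (-2:ℝ) • (h + t • (k - h)) := by
    intro t; rw [hdefh, hdefk]; module
  have hFq : ∀ t : ℝ, ‖h + t • (k - h)‖ ^ 2 = H + 2 * t * (D - H) + t ^ 2 * S := by
    intro t
    rw [@norm_add_sq_real, norm_smul, real_inner_smul_right, inner_sub_right,
      real_inner_self_eq_norm_sq]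
    rw [mul_pow, ← hSnorm]
    simp [hH, hD]
    ring
  have key : ∀ t : ℝ, ‖h + T • (k - h)‖ ^ 2 ≤ ‖h + t • (k - h)‖ ^ 2 := by
    intro t
    rw [hFq, hFq]
    have h1 : S * (t - T) ^ 2 ≥ 0 := by positivity
    have h2 : T * S = H - D := by rw [hT]; field_simp
    have heq : H + 2 * t * (D - H) + t ^ 2 * S
        = (H + 2 * T * (D - H) + T ^ 2 * S) + S * (t - T) ^ 2 := by
      linear_combination (2 * (t - T)) * h2
    linarith [h1, heq]
  refine ⟨hS, ?_⟩
  have hmem : ∀ t : ℝ, (fun t : ℝ => ‖(t • b + (1 - t) • a) - (t • b' + (1 - t) • a')‖) t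
      = 2 * ‖h + t • (k - h)‖ := by
    intro t
    simp only [hvec t, norm_smul]
    norm_num
  have hLeast : IsLeast ((fun t : ℝ => ‖(t • b + (1 - t) • a) - (t • b' + (1 - t) • a')‖) ''
      Set.Icc 0 1) (2 * ‖h + T • (k - h)‖) := by
    constructor
    · exact ⟨T, ⟨hT0, hT1⟩, hmem T⟩
    · rintro x ⟨t, _, rfl⟩
      rw [hmem t]
      have := key t
      have h1 : ‖h + T • (k - h)‖ ≤ ‖h + t • (k - h)‖ := by
        nlinarith [key t, norm_nonneg (h + T • (k - h)), norm_nonneg (h + t • (k - h))]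
      linarith
  rw [hLeast.csInf_eq]
  have hTval : ‖h + T • (k - h)‖ ^ 2 = (H * K - D ^ 2) / S := by
    rw [hFq, hT]
    field_simp
    rw [hSdef]
    ring
  have : (2 * ‖h + T • (k - h)‖) ^ 2 = 4 * ((H * K - D ^ 2) / S) := by
    rw [mul_pow, hTval]; norm_num
  rw [this, mul_div_assoc]
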